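/- arXiv:2406.10427 — 2 statements merged into one kernel-verified Lean document; each statement's English description precedes it below -/
import Mathlib

section
/- Let M be a Markov kernel from ℝ^d to a finite label set Y that is f-DP for B_p(r) neighbourhoods, where f : [0,1] → [0,1] is non-increasing. Let X ∈ ℝ^d, let y₊ ∈ Y, and let p₊, p₋ ∈ [0,1] satisfy P(M(X) = y₊) ≥ p₊ ≥ p₋ ≥ max_{y ≠ y₊} P(M(X) = y). If f(1 − p₊) ≥ 1 − f(p₋), then for every e ∈ ℝ^d with ‖e‖_p ≤ r and every y ∈ Y, P(M(X+e) = y₊) ≥ P(M(X+e) = y); that is, y₊ remains a most probable class of M(X+e). -/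
open MeasureTheory ProbabilityTheory Real
open scoped NNReal ENNReal

/-- Standard normal CDF Φ. -/
noncomputable def Phi (x : ℝ) : ℝ := ((gaussianReal 0 1) (Set.Iic x)).toReal

/-- Inverse of the standard normal CDF, Φ⁻¹. -/
noncomputable def PhiInv (q : ℝ) : ℝ := Function.invFun Phi q

/-- The trade-off function of the Gaussian mechanism, `G_μ(α) = Φ(Φ⁻¹(1-α) − μ)`. -/
noncomputable def Gmu (μ α : ℝ) : ℝ := Phi (PhiInv (1 - α) - μ)

/-- Euclidean (L2) norm on `ℝ^n`. -/
noncomputable def l2norm {n : ℕ} (x : Fin n → ℝ) : ℝ := Real.sqrt (∑ i, (x i) ^ 2)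

/-- Maximum (L∞) norm on `ℝ^n`. -/
noncomputable def linftyNorm {n : ℕ} (x : Fin n → ℝ) : ℝ := ⨆ i, |x i|

/-- Lp norm on `ℝ^n`. -/
noncomputable def lpNorm {n : ℕ} (p : ℝ) (x : Fin n → ℝ) : ℝ := (∑ i, |x i| ^ p) ^ (1 / p)

/-- `T(P,Q) ≥ f`: every measurable `[0,1]`-valued test `φ` has type II error
`1 − ∫ φ dQ` at least `f` of its level `∫ φ dP`. -/
def TradeoffGE {Ω : Type*} [MeasurableSpace Ω] (P Q : Measure Ω) (f : ℝ → ℝ) : Prop :=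
  ∀ φ : Ω → ℝ, Measurable φ → (∀ ω, φ ω ∈ Set.Icc (0 : ℝ) 1) →
    1 - ∫ ω, φ ω ∂Q ≥ f (∫ ω, φ ω ∂P)

/-- The Gaussian measure `N(v, s·I_d)` on `ℝ^d` (spherical covariance `s ≥ 0`). -/
noncomputable def gaussPi (d : ℕ) (v : Fin d → ℝ) (s : ℝ≥0) : Measure (Fin d → ℝ) :=
  Measure.pi fun i => gaussianReal (v i) s

/-- **f-DP robustness of the most probable class.**
If a Markov kernel `M` from `ℝ^d` to a finite label set `Y` is `f`-DP for `B_p(r)`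
neighbourhoods, `f` non-increasing on `[0,1]`, `P(M(X) = yPlus) ≥ pPlus ≥ pMinus ≥ max_{y ≠ yPlus} P(M(X) = y)`,
and `f(1 − pPlus) ≥ 1 − f(pMinus)`, then for every `e` with `‖e‖_p ≤ r`, `yPlus` remains a most
probable class of `M(X + e)`. -/
theorem fdp_robustness {d : ℕ} {Y : Type*} [Fintype Y] [MeasurableSpace Y]
    [MeasurableSingletonClass Y]
    (p r : ℝ) (f : ℝ → ℝ)
    (hf_anti : AntitoneOn f (Set.Icc (0 : ℝ) 1))
    (hf_mem : ∀ x ∈ Set.Icc (0 : ℝ) 1, f x ∈ Set.Icc (0 : ℝ) 1)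
    (M : ProbabilityTheory.Kernel (Fin d → ℝ) Y) [ProbabilityTheory.IsMarkovKernel M]
    (hDP : ∀ X X' : Fin d → ℝ, lpNorm p (X - X') ≤ r → TradeoffGE (M X) (M X') f)
    (X : Fin d → ℝ) (yPlus : Y) (pPlus pMinus : ℝ)
    (hpPlus : pPlus ∈ Set.Icc (0 : ℝ) 1) (hpMinus : pMinus ∈ Set.Icc (0 : ℝ) 1)
    (hplus : ((M X) {yPlus}).toReal ≥ pPlus)
    (horder : pPlus ≥ pMinus)
    (hminus : ∀ y : Y, y ≠ yPlus → ((M X) {y}).toReal ≤ pMinus)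
    (hcert : f (1 - pPlus) ≥ 1 - f pMinus) :
    ∀ e : Fin d → ℝ, lpNorm p e ≤ r → ∀ y : Y,
      ((M (X + e)) {yPlus}).toReal ≥ ((M (X + e)) {y}).toReal := by

  intro e he y
  by_cases hy : y = yPlus
  · subst hy; exact le_refl _
  -- probability facts
  have hPprob : IsProbabilityMeasure (M X) := inferInstance
  have hQprob : IsProbabilityMeasure (M (X + e)) := inferInstance
  have hnorm : lpNorm p (X - (X + e)) ≤ r := by
    have h1 : X - (X + e) = -e := by funext i; simp
    have h2 : lpNorm p (-e) = lpNorm p e := by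
      unfold _root_.lpNorm
      congr 1
      refine Finset.sum_congr rfl fun i _ => ?_
      simp
    rw [h1, h2]; exact he
  have hT := hDP X (X + e) hnorm
  have toReal_le_one : ∀ (μ : Measure Y) [IsProbabilityMeasure μ] (s : Set Y),
      (μ s).toReal ≤ 1 := by
    intro μ _ s
    have : μ s ≤ 1 := prob_le_one
    simpa using ENNReal.toReal_mono (by simp) this
  -- first test: indicator of {yPlus}ᶜ
  have hφ1meas : Measurable (({yPlus}ᶜ : Set Y).indicator (1 : Y → ℝ)) :=
    measurable_const.indicator (measurableSet_singleton yPlus).compl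
  have hφ1mem : ∀ ω, ({yPlus}ᶜ : Set Y).indicator (1 : Y → ℝ) ω ∈ Set.Icc (0 : ℝ) 1 := by
    intro ω
    by_cases h : ω ∈ ({yPlus}ᶜ : Set Y) <;> simp [Set.indicator_apply, h]
  have hint1P : ∫ ω, ({yPlus}ᶜ : Set Y).indicator (1 : Y → ℝ) ω ∂(M X)
      = ((M X) {yPlus}ᶜ).toReal := integral_indicator_one (measurableSet_singleton yPlus).compl
  have hint1Q : ∫ ω, ({yPlus}ᶜ : Set Y).indicator (1 : Y → ℝ) ω ∂(M (X + e))
      = ((M (X + e)) {yPlus}ᶜ).toReal :=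
    integral_indicator_one (measurableSet_singleton yPlus).compl
  have hcompl : ∀ (μ : Measure Y) [IsProbabilityMeasure μ],
      (μ {yPlus}ᶜ).toReal = 1 - (μ {yPlus}).toReal := by
    intro μ _
    rw [prob_compl_eq_one_sub (measurableSet_singleton yPlus)]
    rw [ENNReal.toReal_sub_of_le prob_le_one (by simp)]
    simp
  have h1 := hT _ hφ1meas hφ1mem
  rw [hint1P, hint1Q, hcompl, hcompl] at h1
  -- h1 : 1 - (1 - Q{yPlus}) ≥ f (1 - P{yPlus})
  have hQplus : ((M (X + e)) {yPlus}).toReal ≥ f (1 - ((M X) {yPlus}).toReal) := by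
    linarith [h1]
  have hmem1 : 1 - ((M X) {yPlus}).toReal ∈ Set.Icc (0 : ℝ) 1 := by
    constructor
    · linarith [toReal_le_one (M X) {yPlus}]
    · have : (0 : ℝ) ≤ ((M X) {yPlus}).toReal := ENNReal.toReal_nonneg
      linarith
  have hmem2 : 1 - pPlus ∈ Set.Icc (0 : ℝ) 1 := by
    constructor <;> [linarith [hpPlus.2]; linarith [hpPlus.1]]
  have hmono1 : f (1 - pPlus) ≤ f (1 - ((M X) {yPlus}).toReal) :=
    hf_anti hmem1 hmem2 (by linarith)
  -- second test: indicator of {y}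
  have hφ2meas : Measurable (({y} : Set Y).indicator (1 : Y → ℝ)) :=
    measurable_const.indicator (measurableSet_singleton y)
  have hφ2mem : ∀ ω, ({y} : Set Y).indicator (1 : Y → ℝ) ω ∈ Set.Icc (0 : ℝ) 1 := by
    intro ω
    by_cases h : ω ∈ ({y} : Set Y) <;> simp [Set.indicator_apply, h]
  have h2 := hT _ hφ2meas hφ2mem
  rw [integral_indicator_one (measurableSet_singleton y),
      integral_indicator_one (measurableSet_singleton y)] at h2
  -- h2 : 1 - Q{y} ≥ f (P{y})
  have hmemy : ((M X) {y}).toReal ∈ Set.Icc (0 : ℝ) 1 :=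
    ⟨ENNReal.toReal_nonneg, toReal_le_one (M X) {y}⟩
  have hmono2 : f pMinus ≤ f (((M X) {y}).toReal) :=
    hf_anti hmemy hpMinus (hminus y hy)
  simp only [Measure.real] at h2
  linarith
end

section
/- Let σ > 0 and p₊, p₋ ∈ (0,1). Then for every r ∈ ℝ, the inequality Φ(Φ⁻¹(p₊) − r/σ) ≥ 1 − Φ(Φ⁻¹(1 − p₋) − r/σ) holds if and only if r ≤ (σ/2)(Φ⁻¹(p₊) − Φ⁻¹(p₋)). Equivalently, G_{r/σ}(1 − p₊) ≥ 1 − G_{r/σ}(p₋) exactly when r ≤ (σ/2)(Φ⁻¹(p₊) − Φ⁻¹(p₋)). -/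
open MeasureTheory ProbabilityTheory Real
open scoped NNReal ENNReal

section PhiLemmas

lemma Phi_eq_cdf (x : ℝ) : Phi x = cdf (gaussianReal 0 1) x := (cdf_eq_real _ x).symm

lemma gauss_Ioc_pos {x y : ℝ} (h : x < y) : 0 < gaussianReal 0 1 (Set.Ioc x y) := by
  rw [pos_iff_ne_zero]
  intro h0
  have := (gaussianReal_absolutelyContinuous' 0 one_ne_zero) h0
  rw [Real.volume_Ioc] at this
  simp only [ENNReal.ofReal_eq_zero] at this
  linarith

lemma Phi_strictMono : StrictMono Phi := by
  intro x y hxy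
  have h1 : Set.Iic y = Set.Iic x ∪ Set.Ioc x y := (Set.Iic_union_Ioc_eq_Iic hxy.le).symm
  have hd : Disjoint (Set.Iic x) (Set.Ioc x y) := Set.Iic_disjoint_Ioc le_rfl
  unfold Phi
  rw [h1, measure_union hd measurableSet_Ioc,
    ENNReal.toReal_add (measure_ne_top _ _) (measure_ne_top _ _)]
  have hpos : 0 < (gaussianReal 0 1 (Set.Ioc x y)).toReal :=
    ENNReal.toReal_pos (gauss_Ioc_pos hxy).ne' (measure_ne_top _ _)
  linarith

lemma gaussianPDFReal_le_one (t : ℝ) : gaussianPDFReal 0 1 t ≤ 1 := by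
  unfold gaussianPDFReal
  have h1 : rexp (-(t - 0) ^ 2 / (2 * ((1 : ℝ≥0) : ℝ))) ≤ 1 := by
    rw [Real.exp_le_one_iff]
    have : (0:ℝ) ≤ (t - 0) ^ 2 := sq_nonneg _
    have h2 : (0:ℝ) < 2 * ((1 : ℝ≥0) : ℝ) := by norm_num
    apply div_nonpos_of_nonpos_of_nonneg <;> [linarith; positivity]
  have h2 : (1 : ℝ) ≤ √(2 * π * ((1 : ℝ≥0) : ℝ)) := by
    rw [show ((1:ℝ≥0):ℝ) = 1 by norm_num, mul_one]
    rw [show (1:ℝ) = √1 by simp]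
    apply Real.sqrt_le_sqrt
    nlinarith [Real.pi_gt_three]
  have h3 : (√(2 * π * ((1 : ℝ≥0) : ℝ)))⁻¹ ≤ 1 := by
    rw [inv_le_one_iff₀]; right; exact h2
  have h4 : (0:ℝ) ≤ (√(2 * π * ((1 : ℝ≥0) : ℝ)))⁻¹ := by positivity
  calc (√(2 * π * ((1 : ℝ≥0) : ℝ)))⁻¹ * rexp (-(t - 0) ^ 2 / (2 * ((1 : ℝ≥0) : ℝ)))
      ≤ 1 * 1 := mul_le_mul h3 h1 (Real.exp_nonneg _) (by norm_num)
    _ = 1 := by norm_num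

lemma gauss_le_volume (s : Set ℝ) (hs : MeasurableSet s) :
    gaussianReal 0 1 s ≤ volume s := by
  rw [gaussianReal_apply 0 one_ne_zero s]
  calc ∫⁻ x in s, gaussianPDF 0 1 x
      ≤ ∫⁻ _ in s, 1 := by
        refine lintegral_mono fun x => ?_
        rw [gaussianPDF_def, ENNReal.ofReal_le_one]
        exact gaussianPDFReal_le_one x
    _ = volume s := by simp [hs]

lemma Phi_lipschitz : LipschitzWith 1 Phi := by
  apply LipschitzWith.of_dist_le_mul
  have key : ∀ x y : ℝ, x ≤ y → Phi y - Phi x ≤ y - x := by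
    intro x y hxy
    have h1 : Set.Iic y = Set.Iic x ∪ Set.Ioc x y := (Set.Iic_union_Ioc_eq_Iic hxy).symm
    have hd : Disjoint (Set.Iic x) (Set.Ioc x y) := Set.Iic_disjoint_Ioc le_rfl
    unfold Phi
    rw [h1, measure_union hd measurableSet_Ioc,
      ENNReal.toReal_add (measure_ne_top _ _) (measure_ne_top _ _)]
    have h2 : (gaussianReal 0 1 (Set.Ioc x y)).toReal ≤ y - x := by
      have := gauss_le_volume (Set.Ioc x y) measurableSet_Ioc
      rw [Real.volume_Ioc] at this
      calc (gaussianReal 0 1 (Set.Ioc x y)).toReal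
          ≤ (ENNReal.ofReal (y - x)).toReal :=
            ENNReal.toReal_mono (by simp) this
        _ ≤ y - x := by rw [ENNReal.toReal_ofReal (by linarith)]
    linarith
  intro x y
  rcases le_total x y with h | h
  · rw [Real.dist_eq, Real.dist_eq, abs_sub_comm, abs_of_nonneg
      (sub_nonneg.mpr (Phi_strictMono.monotone h)), abs_sub_comm,
      abs_of_nonneg (sub_nonneg.mpr h)]
    simpa using key x y h
  · rw [Real.dist_eq, Real.dist_eq, abs_of_nonneg
      (sub_nonneg.mpr (Phi_strictMono.monotone h)),
      abs_of_nonneg (sub_nonneg.mpr h)]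
    simpa using key y x h

lemma Phi_continuous : Continuous Phi := Phi_lipschitz.continuous

lemma Phi_tendsto_atTop : Filter.Tendsto Phi Filter.atTop (nhds 1) :=
  (tendsto_cdf_atTop (gaussianReal 0 1)).congr fun x => (Phi_eq_cdf x).symm

lemma Phi_tendsto_atBot : Filter.Tendsto Phi Filter.atBot (nhds 0) :=
  (tendsto_cdf_atBot (gaussianReal 0 1)).congr fun x => (Phi_eq_cdf x).symm

lemma Phi_surj {q : ℝ} (h0 : 0 < q) (h1 : q < 1) : ∃ x, Phi x = q := by
  obtain ⟨a, ha⟩ := (Phi_tendsto_atBot.eventually_lt_const h0).exists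
  obtain ⟨b, hb⟩ := (Phi_tendsto_atTop.eventually_const_lt h1).exists
  have hab : a ≤ b := le_of_lt (Phi_strictMono.lt_iff_lt.mp (ha.trans hb))
  have := intermediate_value_Icc hab Phi_continuous.continuousOn
  obtain ⟨x, _, hx⟩ := this ⟨ha.le, hb.le⟩
  exact ⟨x, hx⟩

lemma PhiInv_Phi (x : ℝ) : PhiInv (Phi x) = x :=
  Function.leftInverse_invFun Phi_strictMono.injective x

lemma Phi_PhiInv {q : ℝ} (h0 : 0 < q) (h1 : q < 1) : Phi (PhiInv q) = q :=
  Function.invFun_eq (Phi_surj h0 h1)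

lemma gauss_map_neg : (gaussianReal 0 1).map (fun t : ℝ => -1 * t) = gaussianReal 0 1 := by
  rw [gaussianReal_map_const_mul (-1)]
  norm_num

lemma Phi_neg (x : ℝ) : Phi (-x) = 1 - Phi x := by
  have hx : gaussianReal 0 1 (Set.Iic (-x)) = gaussianReal 0 1 (Set.Ici x) := by
    conv_lhs => rw [← gauss_map_neg]
    rw [Measure.map_apply (by fun_prop) measurableSet_Iic]
    congr 1
    ext t
    simp only [Set.mem_preimage, Set.mem_Iic, Set.mem_Ici]
    constructor <;> intro h <;> linarith
  have hsing : gaussianReal 0 1 ({x} : Set ℝ) = 0 :=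
    gaussianReal_absolutelyContinuous 0 one_ne_zero (measure_singleton x)
  have hIio : gaussianReal 0 1 (Set.Iio x) = gaussianReal 0 1 (Set.Iic x) := by
    rw [show Set.Iio x = Set.Iic x \ {x} from (Set.Iic_diff_right ..).symm]
    exact measure_diff_null hsing
  have hcompl : gaussianReal 0 1 (Set.Ici x) = 1 - gaussianReal 0 1 (Set.Iic x) := by
    rw [show Set.Ici x = (Set.Iio x)ᶜ from Set.compl_Iio.symm,
      measure_compl measurableSet_Iio (measure_ne_top _ _), hIio]
    simp
  unfold Phi
  rw [hx, hcompl, ENNReal.toReal_sub_of_le prob_le_one ENNReal.one_ne_top]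
  simp

lemma PhiInv_one_sub {p : ℝ} (h0 : 0 < p) (h1 : p < 1) : PhiInv (1 - p) = -PhiInv p := by
  have : Phi (-PhiInv p) = 1 - p := by rw [Phi_neg, Phi_PhiInv h0 h1]
  rw [← this, PhiInv_Phi]

end PhiLemmas

/-- **The certified-radius threshold for Gaussian RS.**
For `σ > 0` and `p₊, p₋ ∈ (0,1)`, `Φ(Φ⁻¹(p₊) − r/σ) ≥ 1 − Φ(Φ⁻¹(1 − p₋) − r/σ)` holds iff
`r ≤ (σ/2)(Φ⁻¹(p₊) − Φ⁻¹(p₋))`; equivalently `G_{r/σ}(1 − p₊) ≥ 1 − G_{r/σ}(p₋)`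
exactly when `r ≤ (σ/2)(Φ⁻¹(p₊) − Φ⁻¹(p₋))`. -/
theorem radius_threshold_iff (σ : ℝ) (hσ : 0 < σ) (pPlus pMinus : ℝ)
    (hpPlus : pPlus ∈ Set.Ioo (0 : ℝ) 1) (hpMinus : pMinus ∈ Set.Ioo (0 : ℝ) 1) :
    ∀ r : ℝ,
      ((Phi (PhiInv pPlus - r / σ) ≥ 1 - Phi (PhiInv (1 - pMinus) - r / σ)) ↔
        r ≤ σ / 2 * (PhiInv pPlus - PhiInv pMinus)) ∧
      ((Gmu (r / σ) (1 - pPlus) ≥ 1 - Gmu (r / σ) pMinus) ↔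
        r ≤ σ / 2 * (PhiInv pPlus - PhiInv pMinus)) := by
  obtain ⟨hp0, hp1⟩ := hpPlus
  obtain ⟨hm0, hm1⟩ := hpMinus
  intro r
  have hmain : (Phi (PhiInv pPlus - r / σ) ≥ 1 - Phi (PhiInv (1 - pMinus) - r / σ)) ↔
      r ≤ σ / 2 * (PhiInv pPlus - PhiInv pMinus) := by
    rw [show (1 : ℝ) - Phi (PhiInv (1 - pMinus) - r / σ)
        = Phi (-(PhiInv (1 - pMinus) - r / σ)) by rw [Phi_neg]]
    rw [ge_iff_le, Phi_strictMono.le_iff_le, PhiInv_one_sub hm0 hm1]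
    have hc : σ * (r / σ) = r := mul_div_cancel₀ r hσ.ne'
    constructor <;> intro h <;> nlinarith [mul_le_mul_of_nonneg_left h hσ.le]
  refine ⟨hmain, ?_⟩
  have h2 : Gmu (r / σ) (1 - pPlus) = Phi (PhiInv pPlus - r / σ) := by
    rw [Gmu, sub_sub_cancel]
  have h3 : Gmu (r / σ) pMinus = Phi (PhiInv (1 - pMinus) - r / σ) := rfl
  rw [h2, h3]
  exact hmain
end
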